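/- Let E be an n₁×n₂ random matrix with i.i.d. mean-zero Gaussian entries of variance σ². For deterministic A ∈ ℝ^{n₂×n₁}, B ∈ ℝ^{n₂×n₁}, C ∈ ℝ^{n₁×n₁}, one has E[E A E B Eᵀ C Eᵀ] = σ⁴ Aᵀ B Cᵀ + σ⁴ C B A + σ⁴ Trace(B) Trace(AC)·I_{n₁}. -/

import Mathlib

open MeasureTheory Real Filter ProbabilityTheory
open scoped NNReal ENNReal




lemma integrable_pow_mul_exp {b : ℝ} (hb : 0 < b) (k : ℕ) :
    Integrable (fun x : ℝ => x ^ k * Real.exp (-b * x ^ 2)) := by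
  have h := integrable_rpow_mul_exp_neg_mul_sq hb (s := (k : ℝ))
    (lt_of_lt_of_le neg_one_lt_zero (Nat.cast_nonneg k))
  simpa [Real.rpow_natCast] using h

lemma tendsto_pow_mul_exp_atTop {b : ℝ} (hb : 0 < b) (k : ℕ) :
    Tendsto (fun x : ℝ => x ^ k * Real.exp (-b * x ^ 2)) atTop (nhds 0) := by
  have h := rpow_mul_exp_neg_mul_sq_isLittleO_exp_neg hb (k : ℝ)
  simp only [Real.rpow_natCast] at h
  have h3 : Tendsto (fun x : ℝ => (1/2 : ℝ) * x) atTop atTop :=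
    tendsto_id.const_mul_atTop (by norm_num)
  have h2 : Tendsto (fun x : ℝ => rexp (-(1/2) * x)) atTop (nhds 0) := by
    have := tendsto_exp_neg_atTop_nhds_zero.comp h3
    simpa [Function.comp_def, neg_mul] using this
  exact h.isBigO.trans_tendsto h2

lemma tendsto_pow_mul_exp_atBot {b : ℝ} (hb : 0 < b) (k : ℕ) :
    Tendsto (fun x : ℝ => x ^ k * Real.exp (-b * x ^ 2)) atBot (nhds 0) := by
  have h := ((tendsto_pow_mul_exp_atTop hb k).const_mul ((-1 : ℝ) ^ k)).comp tendsto_neg_atBot_atTop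
  rw [mul_zero] at h
  simp only [Function.comp_def] at h
  refine Tendsto.congr (fun x => ?_) h
  have e1 : (-x : ℝ) ^ 2 = x ^ 2 := neg_sq x
  rw [e1, ← mul_assoc, ← mul_pow]
  norm_num

lemma J_rec {b : ℝ} (hb : 0 < b) (m : ℕ) :
    ∫ x : ℝ, x ^ (m + 2) * Real.exp (-b * x ^ 2)
      = ((m + 1 : ℝ) / (2 * b)) * ∫ x : ℝ, x ^ m * Real.exp (-b * x ^ 2) := by
  set f : ℝ → ℝ := fun x => x ^ (m + 1) * Real.exp (-b * x ^ 2) with hf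
  set f' : ℝ → ℝ := fun x => (m + 1 : ℝ) * (x ^ m * Real.exp (-b * x ^ 2))
      - (2 * b) * (x ^ (m + 2) * Real.exp (-b * x ^ 2)) with hf'
  have hderiv : ∀ x : ℝ, HasDerivAt f (f' x) x := by
    intro x
    have h1 : HasDerivAt (fun x : ℝ => x ^ (m + 1)) ((m + 1 : ℝ) * x ^ m) x := by
      simpa using hasDerivAt_pow (m + 1) x
    have h2 : HasDerivAt (fun x : ℝ => -b * x ^ 2) (-b * (2 * x)) x := by
      simpa using (hasDerivAt_pow 2 x).const_mul (-b)
    have h3 := h2.exp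
    have := h1.mul h3
    refine HasDerivAt.congr_deriv this ?_
    show _ = (m + 1 : ℝ) * (x ^ m * Real.exp (-b * x ^ 2)) - (2 * b) * (x ^ (m + 2) * Real.exp (-b * x ^ 2))
    ring
  have hint : Integrable f' := by
    exact ((integrable_pow_mul_exp hb m).const_mul _).sub
      ((integrable_pow_mul_exp hb (m + 2)).const_mul _)
  have htop : Tendsto f atTop (nhds 0) := tendsto_pow_mul_exp_atTop hb (m + 1)
  have hbot : Tendsto f atBot (nhds 0) := tendsto_pow_mul_exp_atBot hb (m + 1)
  have hIoi : ∫ x in Set.Ioi (0:ℝ), f' x = 0 - f 0 :=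
    integral_Ioi_of_hasDerivAt_of_tendsto' (fun x _ => hderiv x) hint.integrableOn htop
  have hIic : ∫ x in Set.Iic (0:ℝ), f' x = f 0 - 0 :=
    integral_Iic_of_hasDerivAt_of_tendsto' (fun x _ => hderiv x) hint.integrableOn hbot
  have htot : ∫ x : ℝ, f' x = 0 := by
    rw [← integral_add_compl measurableSet_Iic hint, Set.compl_Iic, hIic, hIoi]
    ring
  rw [hf'] at htot
  rw [integral_sub ((integrable_pow_mul_exp hb m).const_mul _)
    ((integrable_pow_mul_exp hb (m + 2)).const_mul _), integral_const_mul, integral_const_mul] at htot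
  have h2b : (2 * b) ≠ 0 := by positivity
  rw [div_mul_eq_mul_div, eq_div_iff h2b]
  linear_combination -htot

lemma J_odd {b : ℝ} {k : ℕ} (hk : Odd k) :
    ∫ x : ℝ, x ^ k * Real.exp (-b * x ^ 2) = 0 := by
  have h := integral_neg_eq_self (fun x : ℝ => x ^ k * Real.exp (-b * x ^ 2)) volume
  simp only [hk.neg_pow, neg_sq, neg_mul] at h
  rw [integral_neg] at h
  have h0 : ∫ x : ℝ, x ^ k * Real.exp (-(b * x ^ 2)) = 0 := by linarith
  simpa [neg_mul] using h0

section Moments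

variable {v : ℝ≥0}

lemma pdf_eq (v : ℝ≥0) (x : ℝ) : gaussianPDFReal 0 v x
    = (√(2 * π * v))⁻¹ * Real.exp (-(2 * (v:ℝ))⁻¹ * x ^ 2) := by
  rw [gaussianPDFReal]
  congr 1
  rw [sub_zero]
  congr 1
  by_cases h : (v : ℝ) = 0
  · simp [h]
  · field_simp

lemma hb_pos (hv : v ≠ 0) : 0 < (2 * (v:ℝ))⁻¹ := by
  have : 0 < (v : ℝ) := by exact_mod_cast pos_iff_ne_zero.mpr hv
  positivity

lemma gaussian_moment_eq (hv : v ≠ 0) (k : ℕ) :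
    ∫ x, x ^ k ∂(gaussianReal 0 v)
      = (√(2 * π * v))⁻¹ * ∫ x : ℝ, x ^ k * Real.exp (-(2 * (v:ℝ))⁻¹ * x ^ 2) := by
  rw [gaussianReal_of_var_ne_zero 0 hv]
  have hd : gaussianPDF 0 v = fun x => ((gaussianPDFReal 0 v x).toNNReal : ℝ≥0∞) := rfl
  rw [hd, integral_withDensity_eq_integral_smul
    ((measurable_gaussianPDFReal 0 v).real_toNNReal) _]
  have : ∀ x : ℝ, (gaussianPDFReal 0 v x).toNNReal • (x ^ k)
      = (√(2 * π * v))⁻¹ * (x ^ k * Real.exp (-(2 * (v:ℝ))⁻¹ * x ^ 2)) := by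
    intro x
    rw [NNReal.smul_def, Real.coe_toNNReal _ (gaussianPDFReal_nonneg 0 v x), pdf_eq,
      smul_eq_mul]
    ring
  simp_rw [this]
  rw [integral_const_mul]

lemma gaussian_c_mul_J0 (hv : v ≠ 0) :
    (√(2 * π * v))⁻¹ * ∫ x : ℝ, x ^ 0 * Real.exp (-(2 * (v:ℝ))⁻¹ * x ^ 2) = 1 := by
  have h := integral_gaussianPDFReal_eq_one 0 hv
  simp_rw [pdf_eq v] at h
  rw [integral_const_mul] at h
  simpa using h

lemma gaussian_moment_two (hv : v ≠ 0) : ∫ x, x ^ 2 ∂(gaussianReal 0 v) = v := by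
  rw [gaussian_moment_eq hv, show (2 : ℕ) = 0 + 2 from rfl, J_rec (hb_pos hv) 0]
  have hb := hb_pos hv
  have hv' : 0 < (v : ℝ) := by exact_mod_cast pos_iff_ne_zero.mpr hv
  have h0 := gaussian_c_mul_J0 hv
  rw [← mul_assoc, mul_comm ((√(2 * π * v))⁻¹), mul_assoc, h0, mul_one]
  push_cast
  rw [div_eq_iff (by positivity)]
  field_simp
  ring

lemma gaussian_moment_four (hv : v ≠ 0) : ∫ x, x ^ 4 ∂(gaussianReal 0 v) = 3 * (v:ℝ) ^ 2 := by
  rw [gaussian_moment_eq hv, show (4 : ℕ) = 2 + 2 from rfl, J_rec (hb_pos hv) 2]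
  have hv' : 0 < (v : ℝ) := by exact_mod_cast pos_iff_ne_zero.mpr hv
  have h2 := gaussian_moment_two hv
  rw [gaussian_moment_eq hv] at h2
  rw [← mul_assoc, mul_comm ((√(2 * π * v))⁻¹), mul_assoc, h2]
  push_cast
  rw [div_mul_eq_mul_div, div_eq_iff (by positivity)]
  field_simp
  ring

lemma gaussian_moment_odd (hv : v ≠ 0) {k : ℕ} (hk : Odd k) :
    ∫ x, x ^ k ∂(gaussianReal 0 v) = 0 := by
  rw [gaussian_moment_eq hv, J_odd hk, mul_zero]

lemma gaussian_integrable_pow (hv : v ≠ 0) (k : ℕ) :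
    Integrable (fun x => x ^ k) (gaussianReal 0 v) := by
  rw [gaussianReal_of_var_ne_zero 0 hv]
  have hd : gaussianPDF 0 v = fun x => ENNReal.ofReal (gaussianPDFReal 0 v x) := rfl
  rw [hd, integrable_withDensity_iff ((measurable_gaussianPDFReal 0 v).ennreal_ofReal) (ae_of_all _ fun x => ENNReal.ofReal_lt_top)]
  have : (fun x : ℝ => x ^ k * (ENNReal.ofReal (gaussianPDFReal 0 v x)).toReal)
      = fun x => (√(2 * π * v))⁻¹ * (x ^ k * Real.exp (-(2 * (v:ℝ))⁻¹ * x ^ 2)) := by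
    funext x
    rw [ENNReal.toReal_ofReal (gaussianPDFReal_nonneg 0 v x), pdf_eq]
    ring
  rw [this]
  exact (integrable_pow_mul_exp (hb_pos hv) k).const_mul _

end Moments

section ProdLemma

variable {Ω ι : Type*} [MeasurableSpace Ω] {μ : Measure Ω} [IsProbabilityMeasure μ]

lemma iIndep_integral_prod [DecidableEq ι] (f : ι → Ω → ℝ)
    (h : iIndepFun f μ)
    (hm : ∀ i, Measurable (f i)) (hi : ∀ i, Integrable (f i) μ) (s : Finset ι) :
    Integrable (fun ω => ∏ i ∈ s, f i ω) μ ∧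
      ∫ ω, ∏ i ∈ s, f i ω ∂μ = ∏ i ∈ s, ∫ ω, f i ω ∂μ := by
  classical
  induction s using Finset.induction_on with
  | empty => simp
  | insert a s ha ih =>
    have hind : IndepFun (∏ j ∈ s, f j) (f a) μ :=
      h.indepFun_finsetProd_of_notMem hm ha
    have hps : (∏ j ∈ s, f j) = fun ω => ∏ j ∈ s, f j ω := by
      funext ω; simp [Finset.prod_apply]
    have hint : Integrable ((∏ j ∈ s, f j) * f a) μ :=
      hind.integrable_mul (by rw [hps]; exact ih.1) (hi a)
    have heq : (fun ω => ∏ i ∈ insert a s, f i ω) = (∏ j ∈ s, f j) * f a := by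
      funext ω
      simp [Finset.prod_insert ha, Finset.prod_apply, mul_comm]
    constructor
    · rw [heq]; exact hint
    · rw [heq, hind.integral_mul_eq_mul_integral (by rw [hps]; exact ih.1.aestronglyMeasurable) (hi a).aestronglyMeasurable]
      rw [Finset.prod_insert ha, hps]
      rw [ih.2]
      ring
end ProdLemma

section Quad
variable {Ω : Type*} [MeasurableSpace Ω] {μ : Measure Ω} [IsProbabilityMeasure μ]
  {n : ℕ} {σ : ℝ} {E : Ω → Matrix (Fin n) (Fin n) ℝ}

lemma moment_transfer (X : Ω → ℝ) (hX : Measurable X) {v : ℝ≥0} (hv : v ≠ 0)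
    (hg : μ.map X = gaussianReal 0 v) (k : ℕ) :
    Integrable (fun ω => X ω ^ k) μ ∧
      ∫ ω, X ω ^ k ∂μ = ∫ x, x ^ k ∂(gaussianReal 0 v) := by
  have hmk : Measurable fun x : ℝ => x ^ k := measurable_id.pow_const k
  constructor
  · have := gaussian_integrable_pow hv k
    rw [← hg] at this
    exact (integrable_map_measure hmk.aestronglyMeasurable hX.aemeasurable).mp this
  · rw [← hg, integral_map hX.aemeasurable hmk.aestronglyMeasurable]

lemma quad_moment (hσ : 0 < σ)
    (hmeas : ∀ i j, Measurable fun ω => E ω i j)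
    (hindep : iIndepFun
      (fun p : Fin n × Fin n => fun ω => E ω p.1 p.2) μ)
    (hgauss : ∀ i j, Measure.map (fun ω => E ω i j) μ
      = gaussianReal 0 (Real.toNNReal (σ ^ 2)))
    (p q r s : Fin n × Fin n) :
    Integrable (fun ω => E ω p.1 p.2 * E ω q.1 q.2 * E ω r.1 r.2 * E ω s.1 s.2) μ ∧
    ∫ ω, E ω p.1 p.2 * E ω q.1 q.2 * E ω r.1 r.2 * E ω s.1 s.2 ∂μ
      = σ ^ 4 * ((if p = q then (1:ℝ) else 0) * (if r = s then (1:ℝ) else 0)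
        + (if p = r then (1:ℝ) else 0) * (if q = s then (1:ℝ) else 0)
        + (if p = s then (1:ℝ) else 0) * (if q = r then (1:ℝ) else 0)) := by
  classical
  set X : Fin n × Fin n → Ω → ℝ := fun t ω => E ω t.1 t.2 with hXdef
  set v : ℝ≥0 := Real.toNNReal (σ ^ 2) with hvdef
  have hv : v ≠ 0 := by
    simp only [hvdef, ne_eq, Real.toNNReal_eq_zero, not_le]
    positivity
  have hvr : (v : ℝ) = σ ^ 2 := Real.coe_toNNReal _ (by positivity)
  have hXm : ∀ t : Fin n × Fin n, Measurable (X t) := fun t => hmeas t.1 t.2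
  have hmom : ∀ (t : Fin n × Fin n) (k : ℕ), Integrable (fun ω => X t ω ^ k) μ ∧
      ∫ ω, X t ω ^ k ∂μ = ∫ x, x ^ k ∂(gaussianReal 0 v) :=
    fun t k => moment_transfer (X t) (hXm t) hv (hgauss t.1 t.2) k
  have hM1 : ∫ x, x ^ 1 ∂(gaussianReal 0 v) = 0 := gaussian_moment_odd hv ⟨0, rfl⟩
  have hM3 : ∫ x, x ^ 3 ∂(gaussianReal 0 v) = 0 := gaussian_moment_odd hv ⟨1, rfl⟩
  have hM2 : ∫ x, x ^ 2 ∂(gaussianReal 0 v) = σ ^ 2 := by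
    rw [gaussian_moment_two hv, hvr]
  have hM4 : ∫ x, x ^ 4 ∂(gaussianReal 0 v) = 3 * σ ^ 4 := by
    rw [gaussian_moment_four hv, hvr]; ring
  have P : ∀ (m : Fin n × Fin n → ℕ) (S : Finset (Fin n × Fin n)),
      Integrable (fun ω => ∏ t ∈ S, X t ω ^ m t) μ ∧
      ∫ ω, ∏ t ∈ S, X t ω ^ m t ∂μ = ∏ t ∈ S, ∫ x, x ^ m t ∂(gaussianReal 0 v) := by
    intro m S
    have hY : iIndepFun
        (fun t ω => X t ω ^ m t) μ :=
      hindep.comp (fun t (x : ℝ) => x ^ m t) (fun t => measurable_id.pow_const (m t))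
    have := iIndep_integral_prod (fun t ω => X t ω ^ m t) hY
      (fun t => (hXm t).pow_const (m t)) (fun t => (hmom t (m t)).1) S
    exact ⟨this.1, by rw [this.2]; exact Finset.prod_congr rfl fun t _ => (hmom t (m t)).2⟩
  have z0 : ∀ a : Fin n × Fin n, Integrable (fun ω => X a ω ^ 4) μ ∧
      ∫ ω, X a ω ^ 4 ∂μ = 3 * σ ^ 4 := fun a => ⟨(hmom a 4).1, by rw [(hmom a 4).2, hM4]⟩
  have z31 : ∀ a b : Fin n × Fin n, a ≠ b → (Integrable (fun ω => X a ω ^ 3 * X b ω) μ ∧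
      ∫ ω, X a ω ^ 3 * X b ω ∂μ = 0) := by
    intro a b hab
    have h := P (fun t => if t = a then 3 else 1) {a, b}
    have he : (fun ω => ∏ t ∈ ({a, b} : Finset (Fin n × Fin n)),
          X t ω ^ (if t = a then 3 else 1))
        = fun ω => X a ω ^ 3 * X b ω := by
      funext ω
      rw [Finset.prod_insert (by simp [hab]), Finset.prod_singleton, if_pos rfl,
        if_neg (Ne.symm hab), pow_one]
    rw [he] at h
    refine ⟨h.1, ?_⟩
    rw [h.2, Finset.prod_insert (by simp [hab]), Finset.prod_singleton, if_pos rfl,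
      if_neg (Ne.symm hab), hM3, zero_mul]
  have z22 : ∀ a b : Fin n × Fin n, a ≠ b →
      (Integrable (fun ω => X a ω ^ 2 * X b ω ^ 2) μ ∧
      ∫ ω, X a ω ^ 2 * X b ω ^ 2 ∂μ = σ ^ 4) := by
    intro a b hab
    have h := P (fun _ => 2) {a, b}
    have he : (fun ω => ∏ t ∈ ({a, b} : Finset (Fin n × Fin n)), X t ω ^ 2)
        = fun ω => X a ω ^ 2 * X b ω ^ 2 := by
      funext ω
      rw [Finset.prod_insert (by simp [hab]), Finset.prod_singleton]
    rw [he] at h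
    refine ⟨h.1, ?_⟩
    rw [h.2, Finset.prod_insert (by simp [hab]), Finset.prod_singleton, hM2]
    ring
  have z211 : ∀ a b c : Fin n × Fin n, a ≠ b → a ≠ c → b ≠ c →
      (Integrable (fun ω => X a ω ^ 2 * X b ω * X c ω) μ ∧
      ∫ ω, X a ω ^ 2 * X b ω * X c ω ∂μ = 0) := by
    intro a b c hab hac hbc
    have h := P (fun t => if t = a then 2 else 1) {a, b, c}
    have he : (fun ω => ∏ t ∈ ({a, b, c} : Finset (Fin n × Fin n)),
          X t ω ^ (if t = a then 2 else 1))
        = fun ω => X a ω ^ 2 * X b ω * X c ω := by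
      funext ω
      rw [Finset.prod_insert (by simp [hab, hac]), Finset.prod_insert (by simp [hbc]),
        Finset.prod_singleton, if_pos rfl, if_neg (Ne.symm hab), if_neg (Ne.symm hac),
        pow_one, pow_one, mul_assoc]
    rw [he] at h
    refine ⟨h.1, ?_⟩
    rw [h.2, Finset.prod_insert (by simp [hab, hac]), Finset.prod_insert (by simp [hbc]),
      Finset.prod_singleton, if_pos rfl, if_neg (Ne.symm hab), if_neg (Ne.symm hac), hM1]
    ring
  have z1111 : ∀ a b c d : Fin n × Fin n, a ≠ b → a ≠ c → a ≠ d → b ≠ c → b ≠ d → c ≠ d →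
      (Integrable (fun ω => X a ω * X b ω * X c ω * X d ω) μ ∧
      ∫ ω, X a ω * X b ω * X c ω * X d ω ∂μ = 0) := by
    intro a b c d hab hac had hbc hbd hcd
    have h := P (fun _ => 1) {a, b, c, d}
    have he : (fun ω => ∏ t ∈ ({a, b, c, d} : Finset (Fin n × Fin n)), X t ω ^ 1)
        = fun ω => X a ω * X b ω * X c ω * X d ω := by
      funext ω
      rw [Finset.prod_insert (by simp [hab, hac, had]),
        Finset.prod_insert (by simp [hbc, hbd]), Finset.prod_insert (by simp [hcd]),
        Finset.prod_singleton]
      simp only [pow_one]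
      ring
    rw [he] at h
    refine ⟨h.1, ?_⟩
    rw [h.2, Finset.prod_insert (by simp [hab, hac, had]),
      Finset.prod_insert (by simp [hbc, hbd]), Finset.prod_insert (by simp [hcd]),
      Finset.prod_singleton, hM1]
    ring
  have hgoal : (fun ω => E ω p.1 p.2 * E ω q.1 q.2 * E ω r.1 r.2 * E ω s.1 s.2)
      = fun ω => X p ω * X q ω * X r ω * X s ω := rfl
  rw [hgoal]
  by_cases hpq : p = q
  · subst hpq
    by_cases hpr : p = r
    · subst hpr
      by_cases hps : p = s
      · subst hps
        have he : (fun ω => X p ω * X p ω * X p ω * X p ω) = fun ω => X p ω ^ 4 := by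
          funext ω; ring
        rw [he]
        refine ⟨(z0 p).1, ?_⟩
        rw [(z0 p).2]
        norm_num
        ring
      · have he : (fun ω => X p ω * X p ω * X p ω * X s ω)
            = fun ω => X p ω ^ 3 * X s ω := by funext ω; ring
        rw [he]
        refine ⟨(z31 p s hps).1, ?_⟩
        rw [(z31 p s hps).2]
        simp [hps]
    · by_cases hps : p = s
      · subst hps
        have he : (fun ω => X p ω * X p ω * X r ω * X p ω)
            = fun ω => X p ω ^ 3 * X r ω := by funext ω; ring
        rw [he]
        refine ⟨(z31 p r hpr).1, ?_⟩
        rw [(z31 p r hpr).2]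
        simp [hpr, Ne.symm hpr]
      · by_cases hrs : r = s
        · subst hrs
          have he : (fun ω => X p ω * X p ω * X r ω * X r ω)
              = fun ω => X p ω ^ 2 * X r ω ^ 2 := by funext ω; ring
          rw [he]
          refine ⟨(z22 p r hpr).1, ?_⟩
          rw [(z22 p r hpr).2]
          simp [hpr]
        · have he : (fun ω => X p ω * X p ω * X r ω * X s ω)
              = fun ω => X p ω ^ 2 * X r ω * X s ω := by funext ω; ring
          rw [he]
          refine ⟨(z211 p r s hpr hps hrs).1, ?_⟩
          rw [(z211 p r s hpr hps hrs).2]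
          simp [hpr, hps, hrs]
  · by_cases hpr : p = r
    · subst hpr
      by_cases hqs : q = s
      · subst hqs
        have he : (fun ω => X p ω * X q ω * X p ω * X q ω)
            = fun ω => X p ω ^ 2 * X q ω ^ 2 := by funext ω; ring
        rw [he]
        refine ⟨(z22 p q hpq).1, ?_⟩
        rw [(z22 p q hpq).2]
        simp [hpq]
      · by_cases hps : p = s
        · subst hps
          have he : (fun ω => X p ω * X q ω * X p ω * X p ω)
              = fun ω => X p ω ^ 3 * X q ω := by funext ω; ring
          rw [he]
          refine ⟨(z31 p q hpq).1, ?_⟩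
          rw [(z31 p q hpq).2]
          simp [hpq, hqs, Ne.symm hpq]
        · have he : (fun ω => X p ω * X q ω * X p ω * X s ω)
              = fun ω => X p ω ^ 2 * X q ω * X s ω := by funext ω; ring
          rw [he]
          refine ⟨(z211 p q s hpq hps hqs).1, ?_⟩
          rw [(z211 p q s hpq hps hqs).2]
          simp [hpq, hps, hqs]
    · by_cases hps : p = s
      · subst hps
        by_cases hqr : q = r
        · subst hqr
          have he : (fun ω => X p ω * X q ω * X q ω * X p ω)
              = fun ω => X p ω ^ 2 * X q ω ^ 2 := by funext ω; ring
          rw [he]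
          refine ⟨(z22 p q hpq).1, ?_⟩
          rw [(z22 p q hpq).2]
          simp [hpq, hpr]
        · have he : (fun ω => X p ω * X q ω * X r ω * X p ω)
              = fun ω => X p ω ^ 2 * X q ω * X r ω := by funext ω; ring
          rw [he]
          refine ⟨(z211 p q r hpq hpr hqr).1, ?_⟩
          rw [(z211 p q r hpq hpr hqr).2]
          simp [hpq, hpr, hqr]
      · by_cases hqr : q = r
        · subst hqr
          by_cases hqs : q = s
          · subst hqs
            have he : (fun ω => X p ω * X q ω * X q ω * X q ω)
                = fun ω => X q ω ^ 3 * X p ω := by funext ω; ring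
            rw [he]
            refine ⟨(z31 q p (Ne.symm hpq)).1, ?_⟩
            rw [(z31 q p (Ne.symm hpq)).2]
            simp [hpq, hps]
          · have he : (fun ω => X p ω * X q ω * X q ω * X s ω)
                = fun ω => X q ω ^ 2 * X p ω * X s ω := by funext ω; ring
            rw [he]
            refine ⟨(z211 q p s (Ne.symm hpq) hqs hps).1, ?_⟩
            rw [(z211 q p s (Ne.symm hpq) hqs hps).2]
            simp [hpq, hps, hqs]
        · by_cases hqs : q = s
          · subst hqs
            have he : (fun ω => X p ω * X q ω * X r ω * X q ω)
                = fun ω => X q ω ^ 2 * X p ω * X r ω := by funext ω; ring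
            rw [he]
            refine ⟨(z211 q p r (Ne.symm hpq) hqr hpr).1, ?_⟩
            rw [(z211 q p r (Ne.symm hpq) hqr hpr).2]
            simp [hpq, hpr, hps, hqr]
          · by_cases hrs : r = s
            · subst hrs
              have he : (fun ω => X p ω * X q ω * X r ω * X r ω)
                  = fun ω => X r ω ^ 2 * X p ω * X q ω := by funext ω; ring
              rw [he]
              refine ⟨(z211 r p q (Ne.symm hpr) (Ne.symm hqr) hpq).1, ?_⟩
              rw [(z211 r p q (Ne.symm hpr) (Ne.symm hqr) hpq).2]
              simp [hpq, hpr, hps, hqr]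
            · refine ⟨(z1111 p q r s hpq hpr hps hqr hqs hrs).1, ?_⟩
              rw [(z1111 p q r s hpq hpr hps hqr hqs hrs).2]
              simp [hpq, hpr, hps, hqr, hqs, hrs]
end Quad

open Matrix

lemma delta_sum {n : ℕ} (σ : ℝ) (A B C : Matrix (Fin n) (Fin n) ℝ) (i j : Fin n) :
    ∑ f, ∑ e, ∑ d, ∑ c, ∑ b, ∑ a : Fin n,
        (A a b * B c d * C e f) *
          (σ ^ 4 * ((if ((i,a) : Fin n × Fin n) = (b,c) then (1:ℝ) else 0)
              * (if ((e,d) : Fin n × Fin n) = (j,f) then (1:ℝ) else 0)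
            + (if ((i,a) : Fin n × Fin n) = (e,d) then (1:ℝ) else 0)
              * (if ((b,c) : Fin n × Fin n) = (j,f) then (1:ℝ) else 0)
            + (if ((i,a) : Fin n × Fin n) = (j,f) then (1:ℝ) else 0)
              * (if ((b,c) : Fin n × Fin n) = (e,d) then (1:ℝ) else 0)))
      = σ ^ 4 * (Aᵀ * B * Cᵀ) i j
        + σ ^ 4 * (C * B * A) i j
        + σ ^ 4 * B.trace * (A * C).trace * (1 : Matrix (Fin n) (Fin n) ℝ) i j := by
  simp only [Prod.mk.injEq, mul_add, Finset.sum_add_distrib, ite_and, Matrix.mul_apply,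
    Matrix.transpose_apply, Matrix.trace, Matrix.diag, Matrix.one_apply,
    mul_ite, ite_mul, mul_zero, zero_mul, mul_one, one_mul,
    Finset.sum_ite_eq, Finset.sum_ite_eq', Finset.sum_ite_irrel, Finset.sum_const_zero,
    Finset.mem_univ, if_true, Finset.sum_mul, Finset.mul_sum]
  congr 1
  · congr 1
    · exact Finset.sum_congr rfl fun x _ => Finset.sum_congr rfl fun y _ => by ring
    · rw [Finset.sum_comm]
      exact Finset.sum_congr rfl fun x _ => Finset.sum_congr rfl fun y _ => by ring
  · split_ifs with h
    · exact Finset.sum_congr rfl fun x _ => Finset.sum_congr rfl fun y _ =>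
        Finset.sum_congr rfl fun z _ => by ring
    · rfl

/-- if `E` is a random matrix with i.i.d. mean-zero Gaussian entries of
variance `σ²` (square, so that all the products are well-defined), then for deterministic
`A, B, C`, `𝔼[E A E B Eᵀ C Eᵀ] = σ⁴ Aᵀ B Cᵀ + σ⁴ C B A + σ⁴ Tr(B) Tr(AC) I`. -/
theorem gaussian_expectation_fourth_2
    {Ω : Type*} [MeasurableSpace Ω] (μ : Measure Ω) [IsProbabilityMeasure μ]
    {n : ℕ} (σ : ℝ) (hσ : 0 < σ)
    (E : Ω → Matrix (Fin n) (Fin n) ℝ)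
    (hmeas : ∀ i j, Measurable fun ω => E ω i j)
    (hindep : iIndepFun
      (fun p : Fin n × Fin n => fun ω => E ω p.1 p.2) μ)
    (hgauss : ∀ i j, Measure.map (fun ω => E ω i j) μ
      = gaussianReal 0 (Real.toNNReal (σ ^ 2)))
    (A B C : Matrix (Fin n) (Fin n) ℝ) :
    ∀ i j, ∫ ω, (E ω * A * E ω * B * (E ω)ᵀ * C * (E ω)ᵀ) i j ∂μ
      = σ ^ 4 * (Aᵀ * B * Cᵀ) i j
        + σ ^ 4 * (C * B * A) i j
        + σ ^ 4 * B.trace * (A * C).trace * (1 : Matrix (Fin n) (Fin n) ℝ) i j := by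
  intro i j
  have hquad := quad_moment hσ hmeas hindep hgauss
  have hI0 : ∀ a b c d e f : Fin n, Integrable (fun ω => A a b * B c d * C e f *
      (E ω i a * E ω b c * E ω e d * E ω j f)) μ := by
    intro a b c d e f
    exact ((hquad (i,a) (b,c) (e,d) (j,f)).1).const_mul _
  have hfun : (fun ω => (E ω * A * E ω * B * (E ω)ᵀ * C * (E ω)ᵀ) i j)
      = fun ω => ∑ f, ∑ e, ∑ d, ∑ c, ∑ b, ∑ a, A a b * B c d * C e f *
          (E ω i a * E ω b c * E ω e d * E ω j f) := by
    funext ω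
    simp only [Matrix.mul_apply, Matrix.transpose_apply, Finset.sum_mul, Finset.mul_sum]
    refine Finset.sum_congr rfl fun f _ => ?_
    refine Finset.sum_congr rfl fun e _ => ?_
    refine Finset.sum_congr rfl fun d _ => ?_
    refine Finset.sum_congr rfl fun c _ => ?_
    refine Finset.sum_congr rfl fun b _ => ?_
    refine Finset.sum_congr rfl fun a _ => ?_
    ring
  have hswap : ∫ ω, (∑ f, ∑ e, ∑ d, ∑ c, ∑ b, ∑ a, A a b * B c d * C e f *
        (E ω i a * E ω b c * E ω e d * E ω j f)) ∂μ
      = ∑ f, ∑ e, ∑ d, ∑ c, ∑ b, ∑ a, (A a b * B c d * C e f) *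
          ∫ ω, E ω i a * E ω b c * E ω e d * E ω j f ∂μ := by
    rw [integral_finset_sum _ (fun f _ => integrable_finset_sum _ (fun e _ =>
      integrable_finset_sum _ (fun d _ => integrable_finset_sum _ (fun c _ =>
      integrable_finset_sum _ (fun b _ => integrable_finset_sum _ (fun a _ =>
      hI0 a b c d e f))))))]
    refine Finset.sum_congr rfl fun f _ => ?_
    rw [integral_finset_sum _ (fun e _ => integrable_finset_sum _ (fun d _ =>
      integrable_finset_sum _ (fun c _ => integrable_finset_sum _ (fun b _ =>
      integrable_finset_sum _ (fun a _ => hI0 a b c d e f)))))]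
    refine Finset.sum_congr rfl fun e _ => ?_
    rw [integral_finset_sum _ (fun d _ => integrable_finset_sum _ (fun c _ =>
      integrable_finset_sum _ (fun b _ => integrable_finset_sum _ (fun a _ =>
      hI0 a b c d e f))))]
    refine Finset.sum_congr rfl fun d _ => ?_
    rw [integral_finset_sum _ (fun c _ => integrable_finset_sum _ (fun b _ =>
      integrable_finset_sum _ (fun a _ => hI0 a b c d e f)))]
    refine Finset.sum_congr rfl fun c _ => ?_
    rw [integral_finset_sum _ (fun b _ => integrable_finset_sum _ (fun a _ =>
      hI0 a b c d e f))]
    refine Finset.sum_congr rfl fun b _ => ?_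
    rw [integral_finset_sum _ (fun a _ => hI0 a b c d e f)]
    refine Finset.sum_congr rfl fun a _ => ?_
    rw [integral_const_mul]
  have hval : ∀ a b c d e f : Fin n,
      ∫ ω, E ω i a * E ω b c * E ω e d * E ω j f ∂μ
        = σ ^ 4 * ((if ((i,a) : Fin n × Fin n) = (b,c) then (1:ℝ) else 0)
              * (if ((e,d) : Fin n × Fin n) = (j,f) then (1:ℝ) else 0)
            + (if ((i,a) : Fin n × Fin n) = (e,d) then (1:ℝ) else 0)
              * (if ((b,c) : Fin n × Fin n) = (j,f) then (1:ℝ) else 0)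
            + (if ((i,a) : Fin n × Fin n) = (j,f) then (1:ℝ) else 0)
              * (if ((b,c) : Fin n × Fin n) = (e,d) then (1:ℝ) else 0)) :=
    fun a b c d e f => (hquad (i,a) (b,c) (e,d) (j,f)).2
  rw [hfun, hswap]
  simp only [hval]
  exact delta_sum σ A B C i j
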